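/- For N ∈ ℕ and U ∈ U(N), consider the family of operators T_U = −i d/dt on L²([0,1], ℂᴺ) with domain the Sobolev space of f ∈ L^{1,2}([0,1],ℂᴺ) satisfying f(1) = U f(0). Let W be the orthogonal complement in L²([0,1],ℂᴺ) of the constant functions. Then the switched graph of T_U is clean with W (the system T_U φ = 0, ∫₀¹ φ dt = 0 has only the trivial solution), and the symplectic reduction of the switched graph of T_U with respect to W is the subspace L_U = {(i(1−U)b, (1/2)(1+U)b) : b ∈ ℂᴺ} ⊆ ℂᴺ ⊕ ℂᴺ. Moreover, setting U₁ := (1−3U)(3−U)⁻¹, the subspace L_U equals {((1+U₁)a, −i(1−U₁)a) : a ∈ ℂᴺ}, i.e. L_U is the Cayley graph of U₁, and U ↦ (1−3U)(3−U)⁻¹ is an involutive diffeomorphism of U(N). -/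

import Mathlib

noncomputable section

open Matrix

/-- The involution `U ↦ (1 - 3U)(3 - U)⁻¹` of `U(N)`. -/
def redU (N : ℕ) (U : Matrix (Fin N) (Fin N) ℂ) : Matrix (Fin N) (Fin N) ℂ :=
  (1 - (3 : ℂ) • U) * ((3 : Matrix (Fin N) (Fin N) ℂ) - U)⁻¹

section AuxLemmas

variable {E : Type*} [NormedAddCommGroup E] [NormedSpace ℝ E]

/-- A function with constant derivative is affine. -/
lemma aux_affine_sol {v : E} {φ : ℝ → E} (h : ∀ t, HasDerivAt φ v t) (t : ℝ) :
    φ t = φ 0 + t • v := by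
  have hg : ∀ u : ℝ, HasDerivAt (fun r : ℝ => φ r - r • v) 0 u := by
    intro u
    have h2 : HasDerivAt (fun r : ℝ => r • v) v u := by
      simpa using (hasDerivAt_id u).smul_const v
    exact (by simpa using (h u).sub h2 : HasDerivAt (φ - fun r : ℝ => r • v) 0 u)
  have hconst : φ t - t • v = φ 0 - (0:ℝ) • v :=
    is_const_of_deriv_eq_zero (fun u => (hg u).differentiableAt)
      (fun u => (hg u).deriv) t 0
  have h0 : φ t - t • v = φ 0 := by simpa using hconst
  have := eq_add_of_sub_eq h0
  linear_combination (norm := module) this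

lemma aux_integral [CompleteSpace E] (b v : E) :
    (∫ t in (0:ℝ)..1, (b + t • v)) = b + (2⁻¹:ℝ) • v := by
  have hint : IntervalIntegrable (fun t : ℝ => t • v) MeasureTheory.volume 0 1 :=
    (continuous_id.smul continuous_const).intervalIntegrable 0 1
  rw [intervalIntegral.integral_add intervalIntegrable_const hint,
    intervalIntegral.integral_const, intervalIntegral.integral_smul_const, integral_id]
  norm_num

lemma comm_inv {n : Type*} [Fintype n] [DecidableEq n] {A B X : Matrix n n ℂ}
    (hAB : A * B = 1) (hBA : B * A = 1) (h : X * A = A * X) : X * B = B * X := by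
  calc X * B = B * (A * (X * B)) := by rw [← mul_assoc, ← mul_assoc, hBA, one_mul]
  _ = B * ((A * X) * B) := by rw [mul_assoc A]
  _ = B * ((X * A) * B) := by rw [h]
  _ = B * (X * (A * B)) := by rw [mul_assoc]
  _ = B * X := by rw [hAB, mul_one]

open scoped ComplexOrder in
lemma aux_dotProduct_star_self_eq_zero {n : Type*} [Fintype n] {v : n → ℂ}
    (h : star v ⬝ᵥ v = 0) : v = 0 :=
  dotProduct_star_self_eq_zero.mp h

end AuxLemmas

/-- for `U ∈ U(N)`, consider the family `T_U = -i d/dt` on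
`L²([0,1], ℂᴺ)` with boundary condition `f(1) = U f(0)`, and let `W` be the orthogonal
complement of the constant functions. Then:
(i) (cleanness) any solution `φ` of `T_U φ = 0` (i.e. `φ' = 0`) with `φ(1) = U φ(0)` and
`∫₀¹ φ = 0` vanishes;
(ii) (symplectic reduction) any solution of `T_U φ = c` (i.e. `φ' = i c`) with the
boundary condition satisfies `c = i(1-U) φ(0)` and `∫₀¹ φ = (1/2)(1+U) φ(0)`, and
conversely every `b` arises as `φ(0)` of such a solution; hence the symplectic
reduction of the switched graph of `T_U` is `L_U = {(i(1-U)b, (1/2)(1+U)b) : b ∈ ℂᴺ}`;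
(iii) `3 - U` is invertible, `U₁ := (1-3U)(3-U)⁻¹` is unitary, `U ↦ U₁` is an
involution, and `L_U` equals the Cayley graph `{((1+U₁)a, -i(1-U₁)a) : a ∈ ℂᴺ}`
of `U₁`. -/
theorem universal_family_reduction (N : ℕ) (U : Matrix (Fin N) (Fin N) ℂ)
    (hU : U ∈ Matrix.unitaryGroup (Fin N) ℂ) :
    -- (i) cleanness of the switched graph of `T_U` with `W`
    (∀ φ : ℝ → (Fin N → ℂ),
      (∀ t : ℝ, HasDerivAt φ (0 : Fin N → ℂ) t) →
      φ 1 = U.mulVec (φ 0) →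
      (∫ t in (0:ℝ)..1, φ t) = 0 →
      ∀ t : ℝ, φ t = 0) ∧
    -- (ii) computation of the symplectic reduction: `T_U φ = c` means `φ' = i c`
    (∀ (c : Fin N → ℂ) (φ : ℝ → (Fin N → ℂ)),
      (∀ t : ℝ, HasDerivAt φ (Complex.I • c) t) →
      φ 1 = U.mulVec (φ 0) →
      (c = Complex.I • ((1 - U).mulVec (φ 0)) ∧
        (∫ t in (0:ℝ)..1, φ t) = (1 / 2 : ℂ) • ((1 + U).mulVec (φ 0)))) ∧
    (∀ b : Fin N → ℂ, ∃ φ : ℝ → (Fin N → ℂ), φ 0 = b ∧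
      (∀ t : ℝ, HasDerivAt φ (Complex.I • (Complex.I • ((1 - U).mulVec b))) t) ∧
      φ 1 = U.mulVec (φ 0)) ∧
    -- (iii) identification of the reduction with the Cayley graph of `U₁ = redU N U`
    IsUnit ((3 : Matrix (Fin N) (Fin N) ℂ) - U) ∧
    (redU N U ∈ Matrix.unitaryGroup (Fin N) ℂ) ∧
    (redU N (redU N U) = U) ∧
    ({p : (Fin N → ℂ) × (Fin N → ℂ) | ∃ b : Fin N → ℂ,
        p = (Complex.I • ((1 - U).mulVec b), (1 / 2 : ℂ) • ((1 + U).mulVec b))} =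
      {p : (Fin N → ℂ) × (Fin N → ℂ) | ∃ a : Fin N → ℂ,
        p = ((1 + redU N U).mulVec a, (-Complex.I) • ((1 - redU N U).mulVec a))}) := by
  obtain ⟨hVU, hUV⟩ := Unitary.mem_iff.mp hU
  set V := star U with hV
  have h3 : (3 : Matrix (Fin N) (Fin N) ℂ) = (3:ℂ) • 1 := by
    rw [Matrix.smul_one_eq_diagonal, ← Matrix.diagonal_ofNat (α := ℂ) (n := Fin N) 3]
  set A : Matrix (Fin N) (Fin N) ℂ := (3 : Matrix (Fin N) (Fin N) ℂ) - U with hA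
  refine ⟨?_, ?_, ?_, ?_⟩
  · -- (i)
    intro φ hderiv hbc hint
    have haff : ∀ t : ℝ, φ t = φ 0 := by
      intro t
      simpa using aux_affine_sol hderiv t
    have hIconst : (∫ t in (0:ℝ)..1, φ t) = φ 0 := by
      rw [intervalIntegral.integral_congr (g := fun _ : ℝ => φ 0) (fun t _ => haff t),
        intervalIntegral.integral_const]
      simp
    rw [hIconst] at hint
    intro t
    rw [haff t, hint]
  · -- (ii)
    intro c φ hderiv hbc
    set v := Complex.I • c with hv
    have haff : ∀ t : ℝ, φ t = φ 0 + t • v := aux_affine_sol hderiv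
    have h1 : φ 0 + v = U.mulVec (φ 0) := by
      have := haff 1
      rw [one_smul] at this
      rw [← this, hbc]
    have hveq : v = U.mulVec (φ 0) - φ 0 := by
      rw [← h1]; abel
    constructor
    · have hc : c = (-Complex.I) • v := by
        rw [hv, smul_smul]
        norm_num [Complex.I_mul_I]
      rw [hc, hveq, Matrix.sub_mulVec, Matrix.one_mulVec]
      rw [show Complex.I • (φ 0 - U.mulVec (φ 0)) = Complex.I • -(U.mulVec (φ 0) - φ 0) by
        rw [neg_sub]]
      rw [smul_neg, ← neg_smul]
    · have hIeq : (∫ t in (0:ℝ)..1, φ t) = φ 0 + (2⁻¹:ℝ) • v := by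
        rw [intervalIntegral.integral_congr (g := fun t : ℝ => φ 0 + t • v)
          (fun t _ => haff t)]
        exact aux_integral (φ 0) v
      have hsm : (2⁻¹:ℝ) • v = (2⁻¹:ℂ) • v := by
        rw [← algebraMap_smul ℂ (2⁻¹:ℝ) v]
        norm_num
      rw [hIeq, hsm, hveq, Matrix.add_mulVec, Matrix.one_mulVec]
      module
  · -- (ii existence)
    intro b
    refine ⟨fun t : ℝ => b + t • (U.mulVec b - b), by simp, ?_, ?_⟩
    · intro t
      have h2 : HasDerivAt (fun r : ℝ => r • (U.mulVec b - b)) (U.mulVec b - b) t := by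
        simpa using (hasDerivAt_id t).smul_const (U.mulVec b - b)
      have h3' : HasDerivAt (fun r : ℝ => b + r • (U.mulVec b - b)) (U.mulVec b - b) t :=
        h2.const_add b
      have heq : Complex.I • (Complex.I • ((1 - U).mulVec b)) = U.mulVec b - b := by
        rw [smul_smul, Complex.I_mul_I, Matrix.sub_mulVec, Matrix.one_mulVec]
        module
      rw [heq]
      exact h3'
    · simp
  · -- (iii)
    have hinj : Function.Injective A.mulVec := by
      have hker : ∀ x : Fin N → ℂ, A.mulVec x = 0 → x = 0 := by
        intro x hx
        have hUx : U.mulVec x = (3:ℂ) • x := by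
          have h1 : (3 : Matrix (Fin N) (Fin N) ℂ).mulVec x - U.mulVec x = 0 := by
            rw [← Matrix.sub_mulVec]; exact hx
          have h3x : (3 : Matrix (Fin N) (Fin N) ℂ).mulVec x = (3:ℂ) • x := by
            rw [h3, Matrix.smul_mulVec, Matrix.one_mulVec]
          rw [h3x, sub_eq_zero] at h1
          exact h1.symm
        have hnorm : star (U.mulVec x) ⬝ᵥ (U.mulVec x) = star x ⬝ᵥ x := by
          rw [Matrix.star_mulVec, Matrix.dotProduct_mulVec, Matrix.vecMul_vecMul,
            ← Matrix.star_eq_conjTranspose, ← hV, hVU, Matrix.vecMul_one]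
        rw [hUx] at hnorm
        have h9 : (9:ℂ) * (star x ⬝ᵥ x) = star x ⬝ᵥ x := by
          have hst : star ((3:ℂ) • x) = (3:ℂ) • star x := by
            rw [star_smul]; norm_num
          rw [hst, smul_dotProduct, dotProduct_smul, smul_smul,
            smul_eq_mul] at hnorm
          linear_combination hnorm
        have hd : star x ⬝ᵥ x = 0 := by linear_combination h9 / 8
        exact aux_dotProduct_star_self_eq_zero hd
      intro x y h
      have hz : A.mulVec (x - y) = 0 := by
        rw [Matrix.mulVec_sub, h, sub_self]
      exact sub_eq_zero.mp (hker _ hz)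
    have hAunit : IsUnit A := Matrix.mulVec_injective_iff_isUnit.mp hinj
    have hAdet : IsUnit A.det := (Matrix.isUnit_iff_isUnit_det A).mp hAunit
    set B : Matrix (Fin N) (Fin N) ℂ := A⁻¹ with hB
    have hAB : A * B = 1 := Matrix.mul_nonsing_inv A hAdet
    have hBA : B * A = 1 := Matrix.nonsing_inv_mul A hAdet
    have cUA : U * A = A * U := by rw [hA]; noncomm_ring
    have cUB : U * B = B * U := comm_inv hAB hBA cUA
    have cVA : V * A = A * V := by
      rw [hA, h3]; simp only [mul_sub, sub_mul, Matrix.mul_smul, Matrix.smul_mul,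
        mul_one, one_mul, hUV, hVU]
    have cVB : V * B = B * V := comm_inv hAB hBA cVA
    have hstarA : star A = (3 : Matrix (Fin N) (Fin N) ℂ) - V := by
      rw [hA, star_sub, hV]
      congr 1
      rw [h3, star_smul, star_one]
      norm_num
    set sB : Matrix (Fin N) (Fin N) ℂ := star B with hsB
    have hsAB : (star A) * sB = 1 := by rw [← StarMul.star_mul, hBA, star_one]
    have hsBA : sB * (star A) = 1 := by rw [← StarMul.star_mul, hAB, star_one]
    have cVsA : V * star A = star A * V := by
      rw [hstarA, h3]; simp only [mul_sub, sub_mul, Matrix.mul_smul, Matrix.smul_mul,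
        mul_one, one_mul]
    have cVsB : V * sB = sB * V := comm_inv hsAB hsBA cVsA
    have hredU : redU N U = (1 - (3:ℂ) • U) * B := rfl
    have key : (1 - (3:ℂ) • U) * (1 - (3:ℂ) • V) = star A * A := by
      rw [hstarA, hA, h3]
      simp only [mul_sub, sub_mul, Matrix.mul_smul, Matrix.smul_mul, mul_one, one_mul,
        smul_smul, hUV, hVU]
      module
    have hstarU1 : star (redU N U) = sB * (1 - (3:ℂ) • V) := by
      rw [hredU, StarMul.star_mul, star_sub, star_one, star_smul, ← hV, ← hsB]
      norm_num
    have hunit : redU N U ∈ Matrix.unitaryGroup (Fin N) ℂ := by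
      rw [Matrix.mem_unitaryGroup_iff, hstarU1, hredU]
      have c1 : sB * (1 - (3:ℂ) • V) = (1 - (3:ℂ) • V) * sB := by
        simp only [mul_sub, sub_mul, Matrix.mul_smul, Matrix.smul_mul, mul_one, one_mul, cVsB]
      have c2 : B * (1 - (3:ℂ) • V) = (1 - (3:ℂ) • V) * B := by
        simp only [mul_sub, sub_mul, Matrix.mul_smul, Matrix.smul_mul, mul_one, one_mul, cVB]
      calc (1 - (3:ℂ) • U) * B * (sB * (1 - (3:ℂ) • V))
          = (1 - (3:ℂ) • U) * B * ((1 - (3:ℂ) • V) * sB) := by rw [c1]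
        _ = (1 - (3:ℂ) • U) * (B * (1 - (3:ℂ) • V)) * sB := by
            rw [mul_assoc, mul_assoc, mul_assoc]
        _ = (1 - (3:ℂ) • U) * ((1 - (3:ℂ) • V) * B) * sB := by rw [c2]
        _ = ((1 - (3:ℂ) • U) * (1 - (3:ℂ) • V)) * (B * sB) := by
            rw [mul_assoc, mul_assoc, mul_assoc]
        _ = (star A * A) * (B * sB) := by rw [key]
        _ = star A * ((A * B) * sB) := by rw [mul_assoc, mul_assoc]
        _ = 1 := by rw [hAB, one_mul, hsAB]
    have e1 : 1 - (3:ℂ) • redU N U = ((8:ℂ) • U) * B := by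
      rw [hredU]
      calc 1 - (3:ℂ) • ((1 - (3:ℂ) • U) * B)
          = (A - (3:ℂ) • (1 - (3:ℂ) • U)) * B := by
            conv_rhs => rw [sub_mul, Matrix.smul_mul, hAB]
        _ = ((8:ℂ) • U) * B := by
            congr 1
            rw [hA, h3]
            module
    have e2 : (3 : Matrix (Fin N) (Fin N) ℂ) - redU N U = (8:ℂ) • B := by
      rw [hredU]
      calc (3 : Matrix (Fin N) (Fin N) ℂ) - (1 - (3:ℂ) • U) * B
          = ((3:ℂ) • A) * B - (1 - (3:ℂ) • U) * B := by
            conv_rhs => rw [Matrix.smul_mul, hAB, ← h3]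
        _ = ((3:ℂ) • A - (1 - (3:ℂ) • U)) * B := by conv_rhs => rw [sub_mul]
        _ = ((8:ℂ) • (1 : Matrix (Fin N) (Fin N) ℂ)) * B := by
            congr 1
            rw [hA, h3]
            module
        _ = (8:ℂ) • B := by rw [Matrix.smul_mul, one_mul]
    have e3 : ((3 : Matrix (Fin N) (Fin N) ℂ) - redU N U)⁻¹ = (8⁻¹:ℂ) • A := by
      apply Matrix.inv_eq_right_inv
      rw [e2, Matrix.smul_mul, Matrix.mul_smul, smul_smul, hBA]
      norm_num
    have hinv : redU N (redU N U) = U := by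
      rw [show redU N (redU N U) = (1 - (3:ℂ) • redU N U) * ((3 : Matrix (Fin N) (Fin N) ℂ) - redU N U)⁻¹ from rfl,
        e1, e3]
      simp only [Matrix.smul_mul, Matrix.mul_smul, smul_smul, mul_assoc, hBA, mul_one]
      norm_num
    -- Cayley graph identities
    have f3 : 1 + redU N U = (4:ℂ) • ((1 - U) * B) := by
      rw [hredU]
      calc 1 + (1 - (3:ℂ) • U) * B
          = (A + (1 - (3:ℂ) • U)) * B := by
            conv_rhs => rw [add_mul, hAB]
        _ = ((4:ℂ) • (1 - U)) * B := by
            congr 1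
            rw [hA, h3]
            module
        _ = (4:ℂ) • ((1 - U) * B) := by rw [Matrix.smul_mul]
    have f4 : 1 - redU N U = (2:ℂ) • ((1 + U) * B) := by
      rw [hredU]
      calc 1 - (1 - (3:ℂ) • U) * B
          = (A - (1 - (3:ℂ) • U)) * B := by
            conv_rhs => rw [sub_mul, hAB]
        _ = ((2:ℂ) • (1 + U)) * B := by
            congr 1
            rw [hA, h3]
            module
        _ = (2:ℂ) • ((1 + U) * B) := by rw [Matrix.smul_mul]
    have g1 : (1 + redU N U) * A = (4:ℂ) • (1 - U) := by
      rw [f3, Matrix.smul_mul, mul_assoc, hBA, mul_one]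
    have g2 : (1 - redU N U) * A = (2:ℂ) • (1 + U) := by
      rw [f4, Matrix.smul_mul, mul_assoc, hBA, mul_one]
    refine ⟨hAunit, hunit, hinv, ?_⟩
    ext p
    simp only [Set.mem_setOf_eq]
    constructor
    · rintro ⟨b, rfl⟩
      refine ⟨(Complex.I/4) • (A.mulVec b), ?_⟩
      have comp1 : (1 + redU N U).mulVec ((Complex.I/4) • (A.mulVec b))
          = Complex.I • ((1 - U).mulVec b) := by
        rw [Matrix.mulVec_smul, Matrix.mulVec_mulVec, g1, Matrix.smul_mulVec]
        module
      have comp2 : (-Complex.I) • ((1 - redU N U).mulVec ((Complex.I/4) • (A.mulVec b)))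
          = (1/2 : ℂ) • ((1 + U).mulVec b) := by
        rw [Matrix.mulVec_smul, Matrix.mulVec_mulVec, g2, Matrix.smul_mulVec]
        match_scalars
        linear_combination (-(1:ℂ)/2) * Complex.I_mul_I
      rw [← comp1, ← comp2]
    · rintro ⟨a, rfl⟩
      refine ⟨((-4:ℂ) * Complex.I) • (B.mulVec a), ?_⟩
      have comp1 : Complex.I • ((1 - U).mulVec (((-4:ℂ) * Complex.I) • (B.mulVec a)))
          = (1 + redU N U).mulVec a := by
        rw [Matrix.mulVec_smul, Matrix.mulVec_mulVec, f3, Matrix.smul_mulVec]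
        match_scalars
        linear_combination (-4:ℂ) * Complex.I_mul_I
      have comp2 : (1/2 : ℂ) • ((1 + U).mulVec (((-4:ℂ) * Complex.I) • (B.mulVec a)))
          = (-Complex.I) • ((1 - redU N U).mulVec a) := by
        rw [Matrix.mulVec_smul, Matrix.mulVec_mulVec, f4, Matrix.smul_mulVec]
        module
      rw [comp1, comp2]
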